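/- For the strictly regular model with literal degree r and n variables (so α = 2r/k), the total number of configuration formulas is (kαn)! = (2rn)!, and the number of configuration formulas satisfied by both the all-zero assignment and an assignment agreeing with it on exactly i variables equals 2ⁿ-free count ((r(n−i))!)²((ri)!)² · coef(f(x₁,x₂,x₃)^{αn}, x₁^{r(n−i)} x₂^{ri} x₃^{r(n−i)}). -/

import Mathlib

open Equiv Finset MvPolynomial

/-! ### Auxiliary definitions -/

noncomputable def Xv : Fin 4 → MvPolynomial (Fin 3) ℤ := ![X 0, X 1, X 2, 1]

noncomputable def ev : Fin 4 → (Fin 3 →₀ ℕ) :=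
  ![Finsupp.single 0 1, Finsupp.single 1 1, Finsupp.single 2 1, 0]

def typeOfN (a b : ℕ) (x : ℕ) : Fin 4 :=
  if x < a then 0 else if x < a + b then 1 else if x < 2 * a + b then 2 else 3

def blockSize (a b : ℕ) : Fin 4 → ℕ := ![a, b, a, b]

def goodc (k : ℕ) (w : Fin k → Fin 4) : Prop :=
  (∃ i, w i = 1) ∨ ((∃ i, w i = 0) ∧ (∃ i, w i = 2))

instance (k : ℕ) : DecidablePred (goodc k) := fun w => by unfold goodc; infer_instance

def Ncount {k m : ℕ} (W : Fin m → Fin k → Fin 4) (c : Fin 4) : ℕ :=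
  (univ.filter fun p : Fin m × Fin k => W p.1 p.2 = c).card

def enc {k m : ℕ} (j : Fin m) (i : Fin k) : Fin (k * m) :=
  ⟨k * j + i, by
    have h1 : (j : ℕ) + 1 ≤ m := j.isLt
    have h2 : k * ((j : ℕ) + 1) ≤ k * m := Nat.mul_le_mul_left k h1
    have h3 : k * ((j : ℕ) + 1) = k * j + k := by ring
    have h4 := i.isLt
    omega⟩

def divk {k m : ℕ} (k0 : 0 < k) (s : Fin (k * m)) : Fin m :=
  ⟨(s : ℕ) / k, by
    refine (Nat.div_lt_iff_lt_mul k0).2 ?_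
    rw [Nat.mul_comm m k]
    exact s.isLt⟩

def modk {k m : ℕ} (k0 : 0 < k) (s : Fin (k * m)) : Fin k :=
  ⟨(s : ℕ) % k, Nat.mod_lt _ k0⟩

/-! ### Basic lemmas -/

theorem Equiv.Perm.apply_inv_self {α : Type*} (f : Equiv.Perm α) (x : α) : f (f⁻¹ x) = x :=
  Equiv.apply_symm_apply f x

theorem Equiv.Perm.inv_apply_self {α : Type*} (f : Equiv.Perm α) (x : α) : f⁻¹ (f x) = x :=
  Equiv.symm_apply_apply f x

lemma divk_enc {k m : ℕ} (k0 : 0 < k) (j : Fin m) (i : Fin k) : divk k0 (enc j i) = j := by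
  apply Fin.ext
  show (k * (j : ℕ) + i) / k = j
  rw [Nat.mul_add_div k0, Nat.div_eq_of_lt i.isLt, add_zero]

lemma modk_enc {k m : ℕ} (k0 : 0 < k) (j : Fin m) (i : Fin k) : modk k0 (enc j i) = i := by
  apply Fin.ext
  show (k * (j : ℕ) + i) % k = i
  rw [Nat.mul_add_mod, Nat.mod_eq_of_lt i.isLt]

lemma enc_divk_modk {k m : ℕ} (k0 : 0 < k) (s : Fin (k * m)) :
    enc (divk k0 s) (modk k0 s) = s := by
  apply Fin.ext
  show k * ((s : ℕ) / k) + (s : ℕ) % k = s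
  exact Nat.div_add_mod _ _

lemma Xv_eq_monomial (c : Fin 4) : Xv c = monomial (ev c) 1 := by
  fin_cases c <;> simp [Xv, ev, X_pow_eq_monomial] <;> rfl

lemma ev_apply (x : Fin 4) (c : Fin 3) :
    ev x c = if (x : ℕ) = (c : ℕ) then 1 else 0 := by
  fin_cases x <;> fin_cases c <;> simp [ev, Finsupp.single_apply]

lemma prod_monomial_one {β : Type*} (s : Finset β) (d : β → (Fin 3 →₀ ℕ)) :
    ∏ x ∈ s, (monomial (d x) (1 : ℤ)) = monomial (∑ x ∈ s, d x) 1 := by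
  classical
  induction s using Finset.cons_induction with
  | empty => simp
  | cons a s ha ih => rw [prod_cons, ih, sum_cons, monomial_mul, one_mul]

lemma typeOfN_eq_zero (a b x : ℕ) : typeOfN a b x = 0 ↔ x < a := by
  unfold typeOfN; split_ifs <;> simp_all
lemma typeOfN_eq_one (a b x : ℕ) : typeOfN a b x = 1 ↔ a ≤ x ∧ x < a + b := by
  unfold typeOfN; split_ifs <;> simp_all <;> omega
lemma typeOfN_eq_two (a b x : ℕ) : typeOfN a b x = 2 ↔ a + b ≤ x ∧ x < 2 * a + b := by
  unfold typeOfN; split_ifs <;> simp_all <;> omega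
lemma typeOfN_eq_three (a b x : ℕ) : typeOfN a b x = 3 ↔ 2 * a + b ≤ x := by
  unfold typeOfN; split_ifs <;> simp_all <;> omega

lemma card_filter_fin (N : ℕ) (p : ℕ → Prop) [DecidablePred p] :
    (univ.filter fun t : Fin N => p t.val).card = ((range N).filter p).card := by
  rw [Finset.card_filter, Finset.card_filter]
  exact Fin.sum_univ_eq_sum_range (fun x => if p x then 1 else 0) N

lemma card_typeOf_fiber (a b N : ℕ) (hN : N = 2 * a + 2 * b) (c : Fin 4) :
    (univ.filter fun t : Fin N => typeOfN a b t.val = c).card = blockSize a b c := by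
  rw [card_filter_fin N (fun x => typeOfN a b x = c)]
  fin_cases c
  · have : (range N).filter (fun x => typeOfN a b x = 0) = range a := by
      ext x; simp [typeOfN_eq_zero]; omega
    simp [this, blockSize]
  · have : (range N).filter (fun x => typeOfN a b x = 1) = Ico a (a + b) := by
      ext x; simp [typeOfN_eq_one, mem_Ico]; omega
    simp [this, blockSize]
  · have : (range N).filter (fun x => typeOfN a b x = 2) = Ico (a + b) (2 * a + b) := by
      ext x; simp [typeOfN_eq_two, mem_Ico]; omega
    simp [this, blockSize]; omega
  · have : (range N).filter (fun x => typeOfN a b x = 3) = Ico (2 * a + b) N := by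
      ext x; simp [typeOfN_eq_three, mem_Ico]; omega
    simp [this, blockSize]; omega

/-! ### Permutation fiber counting -/

lemma card_perm_comp_eq {α ι : Type*} [Fintype α] [DecidableEq α] [Fintype ι] [DecidableEq ι]
    (f g : α → ι) (h : ∀ c, Fintype.card {x // g x = c} = Fintype.card {x // f x = c}) :
    Fintype.card {σ : Perm α // f ∘ σ = g} = ∏ c, (Fintype.card {x // f x = c}).factorial := by
  let σ0 : Perm α :=
    (Equiv.sigmaFiberEquiv g).symm.trans
      ((Equiv.sigmaCongrRight fun c => Fintype.equivOfCardEq (h c)).trans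
        (Equiv.sigmaFiberEquiv f))
  have hσ0 : ∀ x, f (σ0 x) = g x := by
    intro x
    exact ((Fintype.equivOfCardEq (h (g x))) ⟨x, rfl⟩).2
  have e : {σ : Perm α // f ∘ σ = f} ≃ {σ : Perm α // f ∘ σ = g} := by
    refine Equiv.subtypeEquiv (Equiv.mulRight σ0) fun σ => ?_
    constructor
    · intro hs; funext x
      have h1 := congrFun hs (σ0 x)
      simp only [Function.comp_apply] at h1 ⊢
      simp only [Equiv.coe_mulRight, Perm.mul_apply]
      rw [h1, hσ0]
    · intro hs; funext x
      have := congrFun hs (σ0⁻¹ x)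
      simp only [Equiv.coe_mulRight, Function.comp_apply, Perm.mul_apply,
        Equiv.Perm.apply_inv_self] at this ⊢
      rw [this, ← hσ0 (σ0⁻¹ x), Equiv.Perm.apply_inv_self]
  rw [← Fintype.card_congr e]
  exact DomMulAct.stabilizer_card f

/-! ### `f` as a sum of monomials over good local type assignments -/

lemma f_as_sum (k : ℕ) :
    ((1 + X 0 + X 1 + X 2) ^ k - (1 + X 0) ^ k - (1 + X 2) ^ k + 1 : MvPolynomial (Fin 3) ℤ)
      = ∑ w ∈ univ.filter (goodc k), ∏ i, Xv (w i) := by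
  classical
  have hU : ((1 + X 0 + X 1 + X 2 : MvPolynomial (Fin 3) ℤ)) ^ k
      = ∑ w : Fin k → Fin 4, ∏ i, Xv (w i) := by
    have : (1 + X 0 + X 1 + X 2 : MvPolynomial (Fin 3) ℤ) = ∑ c ∈ univ, Xv c := by
      simp [Fin.sum_univ_four, Xv]; ring
    rw [this, Finset.sum_pow', Fintype.piFinset_univ]
  have hsub : ∀ (s : Finset (Fin 4)), (∑ c ∈ s, Xv c) ^ k
      = ∑ w ∈ univ.filter (fun w : Fin k → Fin 4 => ∀ i, w i ∈ s), ∏ i, Xv (w i) := by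
    intro s
    rw [Finset.sum_pow']
    apply Finset.sum_congr _ (fun _ _ => rfl)
    ext w
    simp [Fintype.mem_piFinset]
  have hA : ((1 + X 0 : MvPolynomial (Fin 3) ℤ)) ^ k
      = ∑ w ∈ univ.filter (fun w : Fin k → Fin 4 => ∀ i, w i ∈ ({0,3} : Finset (Fin 4))),
          ∏ i, Xv (w i) := by
    rw [← hsub]; congr 1; simp [Xv]; ring
  have hB : ((1 + X 2 : MvPolynomial (Fin 3) ℤ)) ^ k
      = ∑ w ∈ univ.filter (fun w : Fin k → Fin 4 => ∀ i, w i ∈ ({2,3} : Finset (Fin 4))),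
          ∏ i, Xv (w i) := by
    rw [← hsub]; congr 1; simp [Xv]; ring
  have hC : (1 : MvPolynomial (Fin 3) ℤ)
      = ∑ w ∈ univ.filter (fun w : Fin k → Fin 4 => ∀ i, w i ∈ ({3} : Finset (Fin 4))),
          ∏ i, Xv (w i) := by
    rw [← hsub]; simp [Xv]
  set A := univ.filter (fun w : Fin k → Fin 4 => ∀ i, w i ∈ ({0,3} : Finset (Fin 4))) with hAdef
  set B := univ.filter (fun w : Fin k → Fin 4 => ∀ i, w i ∈ ({2,3} : Finset (Fin 4))) with hBdef
  have d1 : ∀ x : Fin 4, x ≠ 1 → x ≠ 2 → x = 0 ∨ x = 3 := by decide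
  have d2 : ∀ x : Fin 4, x ≠ 1 → x ≠ 0 → x = 2 ∨ x = 3 := by decide
  have hunion : univ.filter (fun w => ¬ goodc k w) = B ∪ A := by
    ext w
    rw [mem_filter]
    simp only [mem_filter, mem_union, hAdef, hBdef, mem_univ, true_and, goodc,
      mem_insert, mem_singleton]
    constructor
    · intro hw
      push_neg at hw
      obtain ⟨h1, h2⟩ := hw
      by_cases h0 : ∃ i, w i = 0
      · right; intro i; exact d1 _ (h1 i) (h2 h0 i)
      · push_neg at h0
        left; intro i; exact d2 _ (h1 i) (h0 i)
    · rintro (hw | hw)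
      · rintro (⟨i, hi⟩ | ⟨⟨i, hi⟩, _⟩) <;> rcases hw i with h | h <;> simp_all
      · rintro (⟨i, hi⟩ | ⟨_, ⟨i, hi⟩⟩) <;> rcases hw i with h | h <;> simp_all
  have hinter : B ∩ A = univ.filter (fun w : Fin k → Fin 4 => ∀ i, w i ∈ ({3} : Finset (Fin 4))) := by
    ext w
    simp only [mem_inter, mem_filter, hAdef, hBdef, mem_univ, true_and,
      mem_insert, mem_singleton]
    constructor
    · rintro ⟨hB', hA'⟩ i; rcases hB' i with h | h <;> rcases hA' i with h' | h' <;> simp_all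
    · intro h; exact ⟨fun i => Or.inr (h i), fun i => Or.inr (h i)⟩
  have e1 := Finset.sum_filter_add_sum_filter_not univ (goodc k) (fun w => ∏ i, Xv (w i))
  have e2 := Finset.sum_union_inter (s₁ := B) (s₂ := A) (f := fun w => ∏ i, Xv (w i))
  rw [hinter] at e2
  rw [hunion] at e1
  rw [hU, hA, hB, hC]
  linear_combination e2 - e1

/-! ### The coefficient as a cardinality -/

lemma coeff_eq_card (k m : ℕ) (t : Fin 3 →₀ ℕ) :
    (((1 + X 0 + X 1 + X 2) ^ k - (1 + X 0) ^ k - (1 + X 2) ^ k + 1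
        : MvPolynomial (Fin 3) ℤ) ^ m).coeff t
      = (((Fintype.piFinset fun _ : Fin m => univ.filter (goodc k)).filter
          (fun W => (∑ j, ∑ i, ev (W j i)) = t)).card : ℤ) := by
  rw [f_as_sum, Finset.sum_pow', MvPolynomial.coeff_sum]
  have hmono : ∀ W : Fin m → Fin k → Fin 4,
      ∏ j, ∏ i, Xv (W j i) = monomial (∑ j, ∑ i, ev (W j i)) 1 := by
    intro W
    simp_rw [Xv_eq_monomial, prod_monomial_one]
  simp_rw [hmono, coeff_monomial]
  rw [Finset.sum_boole]

/-! ### Count condition correspondences -/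

lemma evsum_apply {k m : ℕ} (W : Fin m → Fin k → Fin 4) (c : Fin 3) :
    (∑ j, ∑ i, ev (W j i)) c = Ncount W (Fin.castSucc c) := by
  rw [Finsupp.finset_sum_apply]
  simp_rw [Finsupp.finset_sum_apply, ev_apply]
  rw [Ncount, Finset.card_filter, Fintype.sum_prod_type]
  apply Finset.sum_congr rfl
  intro j _
  apply Finset.sum_congr rfl
  intro i _
  congr 1
  simp [Fin.ext_iff]

lemma Ncount_total {k m : ℕ} (W : Fin m → Fin k → Fin 4) :
    ∑ c : Fin 4, Ncount W c = m * k := by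
  unfold Ncount
  rw [← Finset.card_eq_sum_card_fiberwise
    (f := fun p : Fin m × Fin k => W p.1 p.2) (s := univ) (t := univ) (fun x _ => mem_univ _)]
  simp [Fintype.card_prod]

lemma count_iff {k m a b : ℕ} (hN : k * m = 2 * a + 2 * b) (W : Fin m → Fin k → Fin 4) :
    (∑ j, ∑ i, ev (W j i))
        = Finsupp.single 0 a + Finsupp.single 1 b + Finsupp.single 2 a
      ↔ ∀ c : Fin 4, Ncount W c = blockSize a b c := by
  have htgt : ∀ c : Fin 3,
      ((Finsupp.single (0 : Fin 3) a + Finsupp.single 1 b + Finsupp.single 2 a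
          : Fin 3 →₀ ℕ)) c
        = blockSize a b (Fin.castSucc c) := by
    intro c
    fin_cases c <;> simp [Finsupp.single_apply, blockSize, Fin.castSucc, Fin.castAdd, Fin.castLE]
  constructor
  · intro h c
    have h0 : Ncount W 0 = a := by
      rw [show (0 : Fin 4) = Fin.castSucc 0 from rfl, ← evsum_apply, h, htgt]; rfl
    have h1 : Ncount W 1 = b := by
      rw [show (1 : Fin 4) = Fin.castSucc 1 from rfl, ← evsum_apply, h, htgt]; rfl
    have h2 : Ncount W 2 = a := by
      rw [show (2 : Fin 4) = Fin.castSucc 2 from rfl, ← evsum_apply, h, htgt]; rfl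
    have h3 : Ncount W 3 = b := by
      have htot := Ncount_total W
      rw [Fin.sum_univ_four, h0, h1, h2] at htot
      have hmk : m * k = 2 * a + 2 * b := by rw [Nat.mul_comm]; exact hN
      omega
    fin_cases c
    · exact h0
    · exact h1
    · exact h2
    · exact h3
  · intro h
    ext c
    rw [evsum_apply, h, htgt]

lemma perm_count (k m a b : ℕ) (k0 : 0 < k) (hN : k * m = 2 * a + 2 * b) :
    (univ.filter fun σ : Perm (Fin (k * m)) =>
       ∀ j : Fin m,
         (∃ t : Fin (k * m), typeOfN a b t.val = 1 ∧ (σ t : ℕ) / k = (j : ℕ)) ∨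
         ((∃ t : Fin (k * m), typeOfN a b t.val = 0 ∧ (σ t : ℕ) / k = (j : ℕ)) ∧
          (∃ t : Fin (k * m), typeOfN a b t.val = 2 ∧ (σ t : ℕ) / k = (j : ℕ)))).card
    = ((Fintype.piFinset fun _ : Fin m => univ.filter (goodc k)).filter
        (fun W => ∀ c : Fin 4, Ncount W c = blockSize a b c)).card
      * (a.factorial ^ 2 * b.factorial ^ 2) := by
  classical
  set Φ : Perm (Fin (k * m)) → (Fin m → Fin k → Fin 4) :=
    fun σ j i => typeOfN a b ((σ⁻¹ (enc j i)) : ℕ) with hΦ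
  set T := ((Fintype.piFinset fun _ : Fin m => univ.filter (goodc k)).filter
      (fun W => ∀ c : Fin 4, Ncount W c = blockSize a b c)) with hT
  have hcorr : ∀ (σ : Perm (Fin (k * m))) (j : Fin m) (c : Fin 4),
      (∃ t : Fin (k * m), typeOfN a b t.val = c ∧ (σ t : ℕ) / k = (j : ℕ))
        ↔ (∃ i, Φ σ j i = c) := by
    intro σ j c
    constructor
    · rintro ⟨t, ht, hdiv⟩
      refine ⟨modk k0 (σ t), ?_⟩
      have hj : divk k0 (σ t) = j := Fin.ext hdiv
      have henc : enc j (modk k0 (σ t)) = σ t := by rw [← hj]; exact enc_divk_modk k0 (σ t)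
      show typeOfN a b ((σ⁻¹ (enc j (modk k0 (σ t)))) : ℕ) = c
      rw [henc, Equiv.Perm.inv_apply_self]
      exact ht
    · rintro ⟨i, hi⟩
      refine ⟨σ⁻¹ (enc j i), hi, ?_⟩
      rw [Equiv.Perm.apply_inv_self]
      exact congrArg Fin.val (divk_enc k0 j i)
  -- counting fibers of a flattened function
  have hNc : ∀ (V : Fin (k * m) → Fin 4) (W : Fin m → Fin k → Fin 4),
      (∀ s, V s = W (divk k0 s) (modk k0 s)) → ∀ c : Fin 4,
      (univ.filter fun s => V s = c).card = Ncount W c := by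
    intro V W hV c
    rw [Ncount]
    apply Finset.card_nbij' (fun s => (divk k0 s, modk k0 s)) (fun p => enc p.1 p.2)
    · intro s hs; simp only [mem_coe, mem_filter, mem_univ, true_and] at hs ⊢; rw [← hV]; exact hs
    · intro p hp; simp only [mem_coe, mem_filter, mem_univ, true_and] at hp ⊢
      rw [hV, divk_enc, modk_enc]; exact hp
    · intro s _; exact enc_divk_modk k0 s
    · intro p _
      have h1 := divk_enc k0 p.1 p.2
      have h2 := modk_enc k0 p.1 p.2
      ext
      · exact congrArg Fin.val h1
      · exact congrArg Fin.val h2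
  -- the count of the Φ-image
  have hΦcount : ∀ (σ : Perm (Fin (k * m))) (c : Fin 4),
      Ncount (Φ σ) c = blockSize a b c := by
    intro σ c
    have hV : ∀ s : Fin (k * m),
        (fun s => typeOfN a b ((σ⁻¹ s : Fin (k * m)) : ℕ)) s
          = Φ σ (divk k0 s) (modk k0 s) := by
      intro s
      show typeOfN a b ((σ⁻¹ s : Fin (k * m)) : ℕ)
        = typeOfN a b ((σ⁻¹ (enc (divk k0 s) (modk k0 s))) : ℕ)
      rw [enc_divk_modk]
    rw [← hNc _ _ hV c]
    rw [← card_typeOf_fiber a b (k * m) hN c]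
    apply Finset.card_nbij' (fun s => σ⁻¹ s) (fun t => σ t)
    · intro s hs; simp only [mem_coe, mem_filter, mem_univ, true_and] at hs ⊢; exact hs
    · intro t ht; simp only [mem_coe, mem_filter, mem_univ, true_and] at ht ⊢
      rw [Equiv.Perm.inv_apply_self]; exact ht
    · intro s _; exact Equiv.Perm.apply_inv_self σ s
    · intro t _; exact Equiv.Perm.inv_apply_self σ t
  have hmem : ∀ σ ∈ (univ.filter fun σ : Perm (Fin (k * m)) =>
       ∀ j : Fin m,
         (∃ t : Fin (k * m), typeOfN a b t.val = 1 ∧ (σ t : ℕ) / k = (j : ℕ)) ∨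
         ((∃ t : Fin (k * m), typeOfN a b t.val = 0 ∧ (σ t : ℕ) / k = (j : ℕ)) ∧
          (∃ t : Fin (k * m), typeOfN a b t.val = 2 ∧ (σ t : ℕ) / k = (j : ℕ)))),
      Φ σ ∈ T := by
    intro σ hσ
    simp only [mem_filter, mem_univ, true_and] at hσ
    rw [hT, mem_filter]
    refine ⟨?_, fun c => hΦcount σ c⟩
    rw [Fintype.mem_piFinset]
    intro j
    simp only [mem_filter, mem_univ, true_and]
    rcases hσ j with h | ⟨h0, h2⟩
    · exact Or.inl ((hcorr σ j 1).1 h)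
    · exact Or.inr ⟨(hcorr σ j 0).1 h0, (hcorr σ j 2).1 h2⟩
  rw [Finset.card_eq_sum_card_fiberwise hmem]
  have hfiber : ∀ W ∈ T,
      ((univ.filter fun σ : Perm (Fin (k * m)) =>
       ∀ j : Fin m,
         (∃ t : Fin (k * m), typeOfN a b t.val = 1 ∧ (σ t : ℕ) / k = (j : ℕ)) ∨
         ((∃ t : Fin (k * m), typeOfN a b t.val = 0 ∧ (σ t : ℕ) / k = (j : ℕ)) ∧
          (∃ t : Fin (k * m), typeOfN a b t.val = 2 ∧ (σ t : ℕ) / k = (j : ℕ)))).filter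
        (fun σ => Φ σ = W)).card
      = a.factorial ^ 2 * b.factorial ^ 2 := by
    intro W hW
    rw [hT, mem_filter, Fintype.mem_piFinset] at hW
    obtain ⟨hWgood, hWcount⟩ := hW
    -- the fiber is the full fiber
    have hfull : ((univ.filter fun σ : Perm (Fin (k * m)) =>
       ∀ j : Fin m,
         (∃ t : Fin (k * m), typeOfN a b t.val = 1 ∧ (σ t : ℕ) / k = (j : ℕ)) ∨
         ((∃ t : Fin (k * m), typeOfN a b t.val = 0 ∧ (σ t : ℕ) / k = (j : ℕ)) ∧
          (∃ t : Fin (k * m), typeOfN a b t.val = 2 ∧ (σ t : ℕ) / k = (j : ℕ)))).filter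
        (fun σ => Φ σ = W))
        = univ.filter (fun σ => Φ σ = W) := by
      ext σ
      simp only [filter_filter, mem_filter, mem_univ, true_and, and_iff_right_iff_imp]
      intro hΦσ j
      have hgj := hWgood j
      simp only [mem_filter, mem_univ, true_and] at hgj
      rw [← hΦσ] at hgj
      rcases hgj with h | ⟨h0, h2⟩
      · exact Or.inl ((hcorr σ j 1).2 h)
      · exact Or.inr ⟨(hcorr σ j 0).2 h0, (hcorr σ j 2).2 h2⟩
    rw [hfull]
    -- identify with permutations intertwining flattened W and typeOf
    have hpred : ∀ σ : Perm (Fin (k * m)),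
        Φ σ = W ↔ (fun s => W (divk k0 s) (modk k0 s)) ∘ σ = (fun t => typeOfN a b t.val) := by
      intro σ
      constructor
      · intro h
        funext t
        have := congrFun (congrFun h (divk k0 (σ t))) (modk k0 (σ t))
        simp only [hΦ] at this
        rw [enc_divk_modk, Equiv.Perm.inv_apply_self] at this
        exact this.symm
      · intro h
        funext j i
        have := congrFun h (σ⁻¹ (enc j i))
        simp only [Function.comp_apply, Equiv.Perm.apply_inv_self] at this
        show typeOfN a b ((σ⁻¹ (enc j i)) : ℕ) = W j i
        rw [← this, divk_enc, modk_enc]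
    rw [Finset.filter_congr (fun σ _ => by rw [hpred σ])]
    have hcards : ∀ c : Fin 4,
        Fintype.card {x : Fin (k * m) // (fun s => W (divk k0 s) (modk k0 s)) x = c}
          = blockSize a b c := by
      intro c
      rw [Fintype.card_subtype]
      rw [hNc (fun s => W (divk k0 s) (modk k0 s)) W (fun _ => rfl) c]
      exact hWcount c
    have heqcards : ∀ c : Fin 4,
        Fintype.card {x : Fin (k * m) // (fun t => typeOfN a b t.val) x = c}
          = Fintype.card {x : Fin (k * m) // (fun s => W (divk k0 s) (modk k0 s)) x = c} := by
      intro c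
      rw [hcards c, Fintype.card_subtype]
      exact card_typeOf_fiber a b (k * m) hN c
    have := card_perm_comp_eq (fun s => W (divk k0 s) (modk k0 s))
      (fun t => typeOfN a b t.val) heqcards
    rw [Fintype.card_subtype] at this
    rw [show (univ.filter fun σ : Perm (Fin (k * m)) =>
        (fun s => W (divk k0 s) (modk k0 s)) ∘ σ = (fun t => typeOfN a b t.val)) =
        (univ.filter fun σ : Perm (Fin (k * m)) =>
        (fun s => W (divk k0 s) (modk k0 s)) ∘ ⇑σ = (fun t => typeOfN a b t.val)) from rfl]
    rw [this]
    simp_rw [hcards]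
    rw [Fin.prod_univ_four]
    show a.factorial * b.factorial * a.factorial * b.factorial = _
    ring
  rw [Finset.sum_congr rfl hfiber, Finset.sum_const, smul_eq_mul]
/-- Strictly regular model with literal degree r, n variables, m = 2rn/k clauses
(so α = 2r/k).  The total number of configuration formulas is (2rn)!, and the
number of configuration formulas satisfied by both the all-zero assignment and
an assignment Y agreeing with it on exactly i variables equals
((r(n−i))!)²((ri)!)² · coef(f^{m}, x₁^{r(n−i)} x₂^{ri} x₃^{r(n−i)}), where
f = (1+X₁+X₂+X₃)^k − (1+X₁)^k − (1+X₃)^k + 1.  The literal slots Fin (k·m) are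
ordered: type-1 slots first (r(n−i) of them), then type-2 (ri), then type-3
(r(n−i)), then type-4 (ri); the clause of clause-slot s is s/k; a clause is
satisfied by both assignments iff it meets a type-2 slot, or both a type-1 and
a type-3 slot. -/
theorem stmt_17 (k r n m i : ℕ) (hk : 3 ≤ k) (hr : 1 ≤ r) (hi : i ≤ n)
    (hm : k * m = 2 * r * n) :
    let f : MvPolynomial (Fin 3) ℤ :=
      (1 + X 0 + X 1 + X 2) ^ k - (1 + X 0) ^ k - (1 + X 2) ^ k + 1
    let type1 : ℕ → Prop := fun t => t < r * (n - i)
    let type2 : ℕ → Prop := fun t => r * (n - i) ≤ t ∧ t < r * (n - i) + r * i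
    let type3 : ℕ → Prop := fun t =>
      r * (n - i) + r * i ≤ t ∧ t < 2 * (r * (n - i)) + r * i
    Fintype.card (Equiv.Perm (Fin (k * m))) = (2 * r * n).factorial ∧
    ((Finset.univ.filter (fun σ : Equiv.Perm (Fin (k * m)) =>
        ∀ j : Fin m,
          (∃ t : Fin (k * m), type2 (t : ℕ) ∧ (σ t : ℕ) / k = (j : ℕ)) ∨
          ((∃ t : Fin (k * m), type1 (t : ℕ) ∧ (σ t : ℕ) / k = (j : ℕ)) ∧
           (∃ t : Fin (k * m), type3 (t : ℕ) ∧ (σ t : ℕ) / k = (j : ℕ))))).card : ℤ)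
      = ((r * (n - i)).factorial : ℤ) ^ 2 * ((r * i).factorial : ℤ) ^ 2
        * (f ^ m).coeff (Finsupp.single 0 (r * (n - i))
            + Finsupp.single 1 (r * i) + Finsupp.single 2 (r * (n - i))) := by
  intro f type1 type2 type3
  set a := r * (n - i) with ha
  set b := r * i with hb
  have k0 : 0 < k := by omega
  have hN : k * m = 2 * a + 2 * b := by
    rw [hm, ha, hb]
    have hni : n - i + i = n := Nat.sub_add_cancel hi
    calc 2 * r * n = 2 * (r * ((n - i) + i)) := by rw [hni]; ring
    _ = 2 * (r * (n - i)) + 2 * (r * i) := by ring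
  constructor
  · simp [Fintype.card_perm, Fintype.card_fin, hm]
  · have ht1 : ∀ x : ℕ, type1 x ↔ typeOfN a b x = 0 := fun x => by
      simp only [type1]; rw [typeOfN_eq_zero]
    have ht2 : ∀ x : ℕ, type2 x ↔ typeOfN a b x = 1 := fun x => by
      simp only [type2]; rw [typeOfN_eq_one]
    have ht3 : ∀ x : ℕ, type3 x ↔ typeOfN a b x = 2 := fun x => by
      simp only [type3]; rw [typeOfN_eq_two]
    have hfilter : (Finset.univ.filter (fun σ : Equiv.Perm (Fin (k * m)) =>
        ∀ j : Fin m,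
          (∃ t : Fin (k * m), type2 (t : ℕ) ∧ (σ t : ℕ) / k = (j : ℕ)) ∨
          ((∃ t : Fin (k * m), type1 (t : ℕ) ∧ (σ t : ℕ) / k = (j : ℕ)) ∧
           (∃ t : Fin (k * m), type3 (t : ℕ) ∧ (σ t : ℕ) / k = (j : ℕ)))))
        = (univ.filter fun σ : Perm (Fin (k * m)) =>
       ∀ j : Fin m,
         (∃ t : Fin (k * m), typeOfN a b t.val = 1 ∧ (σ t : ℕ) / k = (j : ℕ)) ∨
         ((∃ t : Fin (k * m), typeOfN a b t.val = 0 ∧ (σ t : ℕ) / k = (j : ℕ)) ∧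
          (∃ t : Fin (k * m), typeOfN a b t.val = 2 ∧ (σ t : ℕ) / k = (j : ℕ)))) := by
      apply Finset.filter_congr
      intro σ _
      simp only [ht1, ht2, ht3]
    rw [hfilter, perm_count k m a b k0 hN]
    have hcoeff : (f ^ m).coeff (Finsupp.single 0 a + Finsupp.single 1 b
          + Finsupp.single 2 a)
        = (((Fintype.piFinset fun _ : Fin m => univ.filter (goodc k)).filter
          (fun W => (∑ j, ∑ i', ev (W j i'))
            = Finsupp.single 0 a + Finsupp.single 1 b + Finsupp.single 2 a)).card : ℤ) :=
      coeff_eq_card k m _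
    have hsets : ((Fintype.piFinset fun _ : Fin m => univ.filter (goodc k)).filter
          (fun W => (∑ j, ∑ i', ev (W j i'))
            = Finsupp.single 0 a + Finsupp.single 1 b + Finsupp.single 2 a))
        = ((Fintype.piFinset fun _ : Fin m => univ.filter (goodc k)).filter
          (fun W => ∀ c : Fin 4, Ncount W c = blockSize a b c)) := by
      apply Finset.filter_congr
      intro W _
      exact count_iff hN W
    rw [hcoeff, hsets]
    push_cast
    ring
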